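/- Let U ∈ C²(ℝᵈ) and ℓ ∈ C¹(ℝᵈ, ℝᵈ) satisfy ∇U·ℓ ≡ 0, and let c be a critical point of U with invertible Hessian H = ∇²U(c). Then the matrix H·L is skew-symmetric, where L = Dℓ(c) is the Jacobian of ℓ at c. -/

import Mathlib

open RealInnerProductSpace

theorem stmt_6 (d : ℕ)
    (U : EuclideanSpace ℝ (Fin d) → ℝ)
    (ℓ : EuclideanSpace ℝ (Fin d) → EuclideanSpace ℝ (Fin d))
    (hU : ContDiff ℝ 2 U) (hℓ : ContDiff ℝ 1 ℓ)
    (horth : ∀ x, ⟪gradient U x, ℓ x⟫ = (0 : ℝ))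
    (c : EuclideanSpace ℝ (Fin d))
    (hc : gradient U c = 0)
    (hHess : Function.Bijective (fderiv ℝ (gradient U) c)) :
    ∀ x y : EuclideanSpace ℝ (Fin d),
      ⟪fderiv ℝ (gradient U) c (fderiv ℝ ℓ c x), y⟫ =
        -⟪x, fderiv ℝ (gradient U) c (fderiv ℝ ℓ c y)⟫ := by
  set g : EuclideanSpace ℝ (Fin d) → EuclideanSpace ℝ (Fin d) := gradient U with hg
  set H := fderiv ℝ g c with hH
  set L := fderiv ℝ ℓ c with hL
  have hgrad_eq : g = fun x =>
      (InnerProductSpace.toDual ℝ (EuclideanSpace ℝ (Fin d))).symm (fderiv ℝ U x) := rfl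
  have hfd1 : ContDiff ℝ 1 (fun x => fderiv ℝ U x) := hU.fderiv_right (le_refl 2)
  have hgC1 : ContDiff ℝ 1 g := by
    rw [hgrad_eq]
    exact ((InnerProductSpace.toDual ℝ
      (EuclideanSpace ℝ (Fin d))).symm.toContinuousLinearEquiv.toContinuousLinearMap.contDiff).comp hfd1
  have hgd : Differentiable ℝ g := hgC1.differentiable one_ne_zero
  have hℓd : Differentiable ℝ ℓ := hℓ.differentiable one_ne_zero
  -- symmetry of H
  have hsym : ∀ v w, ⟪H v, w⟫ = ⟪v, H w⟫ := by
    have hs : IsSymmSndFDerivAt ℝ U c := hU.contDiffAt.isSymmSndFDerivAt (by norm_num)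
    have hHcomp : H = ((InnerProductSpace.toDual ℝ
        (EuclideanSpace ℝ (Fin d))).symm.toContinuousLinearEquiv.toContinuousLinearMap).comp
        (fderiv ℝ (fun x => fderiv ℝ U x) c) := by
      rw [hH, hg]
      have hcomp : gradient U =
          (⇑(InnerProductSpace.toDual ℝ
            (EuclideanSpace ℝ (Fin d))).symm.toContinuousLinearEquiv) ∘
          (fun x => fderiv ℝ U x) := rfl
      rw [hcomp]
      exact (InnerProductSpace.toDual ℝ
        (EuclideanSpace ℝ (Fin d))).symm.toContinuousLinearEquiv.comp_fderiv
    have key : ∀ v w, ⟪H v, w⟫ = fderiv ℝ (fderiv ℝ U) c v w := by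
      intro v w
      rw [hHcomp]
      simp [InnerProductSpace.toDual_symm_apply]
    intro v w
    rw [key, real_inner_comm, key]
    exact hs v w
  -- first derivative of orthogonality, giving ℓ c = 0
  have hd1 : ∀ v, ⟪H v, ℓ c⟫ + ⟪g c, L v⟫ = 0 := by
    intro v
    have h1 : HasFDerivAt (fun t => ⟪g t, ℓ t⟫)
        ((fderivInnerCLM ℝ (g c, ℓ c)).comp <| H.prod L) c :=
      (hgd c).hasFDerivAt.inner ℝ (hℓd c).hasFDerivAt
    have h3 : (fun t => ⟪g t, ℓ t⟫) = fun _ : EuclideanSpace ℝ (Fin d) => (0 : ℝ) :=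
      funext horth
    rw [h3] at h1
    have h4 := h1.unique (hasFDerivAt_const 0 c)
    have h5 := congrFun (congrArg (fun f : EuclideanSpace ℝ (Fin d) →L[ℝ] ℝ => (f : _ → ℝ)) h4) v
    simp only [ContinuousLinearMap.coe_comp', Function.comp_apply,
      ContinuousLinearMap.prod_apply, fderivInnerCLM_apply, ContinuousLinearMap.zero_apply] at h5
    linarith [h5]
  have hℓc : ℓ c = 0 := by
    obtain ⟨v, hv⟩ := hHess.surjective (ℓ c)
    have h := hd1 v
    rw [hc, hv, inner_zero_left, add_zero] at h
    exact inner_self_eq_zero.mp h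
  -- key : ⟪H u, L u⟫ = 0 via slope limits
  have hkey : ∀ u, ⟪H u, L u⟫ = 0 := by
    intro u
    have hc0 : c + (0 : ℝ) • u = c := by simp
    have hline : HasDerivAt (fun t : ℝ => c + t • u) u 0 := by
      simpa using ((hasDerivAt_id (0 : ℝ)).smul_const u).const_add c
    have hgc : HasFDerivAt g H (c + (0:ℝ) • u) := by rw [hc0]; exact (hgd c).hasFDerivAt
    have hlc : HasFDerivAt ℓ L (c + (0:ℝ) • u) := by rw [hc0]; exact (hℓd c).hasFDerivAt
    have ha : HasDerivAt (fun t : ℝ => g (c + t • u)) (H u) 0 := hgc.comp_hasDerivAt (f := fun t : ℝ => c + t • u) 0 hline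
    have hb : HasDerivAt (fun t : ℝ => ℓ (c + t • u)) (L u) 0 := hlc.comp_hasDerivAt (f := fun t : ℝ => c + t • u) 0 hline
    have hsa := hasDerivAt_iff_tendsto_slope.1 ha
    have hsb := hasDerivAt_iff_tendsto_slope.1 hb
    have htend : Filter.Tendsto
        (fun t : ℝ => ⟪slope (fun t : ℝ => g (c + t • u)) 0 t,
          slope (fun t : ℝ => ℓ (c + t • u)) 0 t⟫) (nhdsWithin 0 {(0:ℝ)}ᶜ)
        (nhds ⟪H u, L u⟫) := hsa.inner hsb
    have heq : (fun t : ℝ => ⟪slope (fun t : ℝ => g (c + t • u)) 0 t,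
          slope (fun t : ℝ => ℓ (c + t • u)) 0 t⟫) =ᶠ[nhdsWithin 0 {(0:ℝ)}ᶜ]
        (fun _ => (0 : ℝ)) := by
      filter_upwards [self_mem_nhdsWithin] with t ht
      rw [slope_def_module, slope_def_module]
      simp only [hc0, hc, hℓc, sub_zero]
      rw [inner_smul_left, inner_smul_right, horth]
      ring
    have hlim : Filter.Tendsto (fun _ : ℝ => (0:ℝ)) (nhdsWithin 0 {(0:ℝ)}ᶜ)
        (nhds ⟪H u, L u⟫) := htend.congr' heq
    exact tendsto_nhds_unique hlim tendsto_const_nhds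
  -- polarize
  have hpol : ∀ x y, ⟪H x, L y⟫ = -⟪H y, L x⟫ := by
    intro x y
    have h := hkey (x + y)
    rw [map_add, map_add] at h
    simp only [inner_add_left, inner_add_right] at h
    rw [hkey x, hkey y] at h
    linarith
  intro x y
  rw [hsym (L x) y, real_inner_comm, hpol y x, hsym x (L y), neg_inj, real_inner_comm]
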